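/- arXiv:1806.00891 — 7 statements merged into one kernel-verified Lean document; each statement's English description precedes it below -/
import Mathlib

section
/- Given real numbers L_F, L_FF, L_FG, L_GG and invariants F, G, define M = L_F² + 2 L_F L_FG G - (1/2) L_F L_GG F - P G², N = 2 L_F L_FF + (1/2) L_F L_GG - P F, P = L_FF L_GG - L_FG². Then N² - 4 M P = (L_F L_GG - N)² + 4 (L_F L_FG - P G)². In particular N² - 4MP ≥ 0, so the roots σ_± = N/(2M) ± √(N²/(4M²) - P/M) are real whenever M ≠ 0. -/
open Finset

noncomputable section

/-- Minkowski metric η = diag(-1,1,1,1) (equal to its own inverse). -/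
def eta : Matrix (Fin 4) (Fin 4) ℝ :=
  Matrix.of fun a b => if a = b then (if a = 0 then (-1 : ℝ) else 1) else 0

/-- Levi-Civita symbol with ε₀₁₂₃ = 1 (Vandermonde formula). -/
def eps (a b c d : Fin 4) : ℝ :=
  (((b : ℕ) : ℝ) - ((a : ℕ) : ℝ)) * (((c : ℕ) : ℝ) - ((a : ℕ) : ℝ)) *
  (((d : ℕ) : ℝ) - ((a : ℕ) : ℝ)) * (((c : ℕ) : ℝ) - ((b : ℕ) : ℝ)) *
  (((d : ℕ) : ℝ) - ((b : ℕ) : ℝ)) * (((d : ℕ) : ℝ) - ((c : ℕ) : ℝ)) / 12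

/-- F^{ab}: both indices raised with η. -/
def raise (F : Matrix (Fin 4) (Fin 4) ℝ) : Matrix (Fin 4) (Fin 4) ℝ :=
  Matrix.of fun a b => ∑ c, ∑ d, eta a c * eta b d * F c d

/-- F_a{}^b: second index raised. -/
def mixdu (F : Matrix (Fin 4) (Fin 4) ℝ) : Matrix (Fin 4) (Fin 4) ℝ :=
  Matrix.of fun a b => ∑ c, F a c * eta c b

/-- F^a{}_b: first index raised. -/
def mixud (F : Matrix (Fin 4) (Fin 4) ℝ) : Matrix (Fin 4) (Fin 4) ℝ :=
  Matrix.of fun a b => ∑ c, eta a c * F c b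

/-- Hodge dual (⋆F)_{ab} = (1/2) ε_{abcd} F^{cd}. -/
def hodge (F : Matrix (Fin 4) (Fin 4) ℝ) : Matrix (Fin 4) (Fin 4) ℝ :=
  Matrix.of fun a b => (1 / 2) * ∑ c, ∑ d, eps a b c d * raise F c d

/-- Invariant F = (1/2) F_{ab} F^{ab}. -/
def invF (F : Matrix (Fin 4) (Fin 4) ℝ) : ℝ :=
  (1 / 2) * ∑ a, ∑ b, F a b * raise F a b

/-- Invariant G = -(1/4) F_{ab} (⋆F)^{ab}. -/
def invG (F : Matrix (Fin 4) (Fin 4) ℝ) : ℝ :=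
  -(1 / 4) * ∑ a, ∑ b, F a b * raise (hodge F) a b

/-- raise the index of a covector: p^a = η^{ab} p_b. -/
def vup (p : Fin 4 → ℝ) : Fin 4 → ℝ := fun a => ∑ b, eta a b * p b

/-- scalar contraction x_a y^a of two covectors. -/
def contra (x y : Fin 4 → ℝ) : ℝ := ∑ a, ∑ b, x a * eta a b * y b

/-- u_a = F_{ab} p^b. -/
def lower (F : Matrix (Fin 4) (Fin 4) ℝ) (p : Fin 4 → ℝ) : Fin 4 → ℝ :=
  fun a => ∑ b, F a b * vup p b

def AntisymM4 (F : Matrix (Fin 4) (Fin 4) ℝ) : Prop := ∀ a b, F a b = - F b a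

/-- optical metric g̃^{bc} = η^{bc} + σ F^{bd} F^c{}_d. -/
def gtil (F : Matrix (Fin 4) (Fin 4) ℝ) (σ : ℝ) : Matrix (Fin 4) (Fin 4) ℝ :=
  Matrix.of fun b c => eta b c + σ * ∑ d, raise F b d * mixud F c d

/-- the matrix M_b{}^d of the zeroth-order field equation. -/
def Mmat (F : Matrix (Fin 4) (Fin 4) ℝ) (p : Fin 4 → ℝ)
    (LF LFF LFG LGG : ℝ) : Matrix (Fin 4) (Fin 4) ℝ :=
  Matrix.of fun b d =>
    -2 * LF * contra p p * (if b = d then (1 : ℝ) else 0)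
    + 2 * LF * p b * vup p d
    - 4 * LFF * lower F p b * vup (lower F p) d
    + 2 * LFG * (lower F p b * vup (lower (hodge F) p) d
        + lower (hodge F) p b * vup (lower F p) d)
    - LGG * lower (hodge F) p b * vup (lower (hodge F) p) d

/-- N² - 4MP = (L_F L_GG - N)² + 4 (L_F L_FG - P G)² ≥ 0, so the roots
    σ_± = N/(2M) ± √(N²/(4M²) - P/M) are real roots whenever M ≠ 0. -/
theorem stmt3 (LF LFF LFG LGG F G : ℝ) :
    let P := LFF * LGG - LFG ^ 2
    let M := LF ^ 2 + 2 * LF * LFG * G - (1 / 2) * LF * LGG * F - P * G ^ 2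
    let N := 2 * LF * LFF + (1 / 2) * LF * LGG - P * F
    N ^ 2 - 4 * M * P = (LF * LGG - N) ^ 2 + 4 * (LF * LFG - P * G) ^ 2 ∧
    0 ≤ N ^ 2 - 4 * M * P ∧
    (M ≠ 0 → ∀ σ : ℝ,
      (σ = N / (2 * M) + Real.sqrt (N ^ 2 / (4 * M ^ 2) - P / M) ∨
       σ = N / (2 * M) - Real.sqrt (N ^ 2 / (4 * M ^ 2) - P / M)) →
      M * σ ^ 2 - N * σ + P = 0) := by
  intro P M N
  have hid : N ^ 2 - 4 * M * P = (LF * LGG - N) ^ 2 + 4 * (LF * LFG - P * G) ^ 2 := by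
    simp only [P, M, N]; ring
  have hnn : 0 ≤ N ^ 2 - 4 * M * P := by rw [hid]; positivity
  refine ⟨hid, hnn, ?_⟩
  clear_value P M N
  intro hM σ hσ
  have hM2 : (0:ℝ) < 4 * M ^ 2 := by positivity
  have hs : N ^ 2 / (4 * M ^ 2) - P / M = (N ^ 2 - 4 * M * P) / (4 * M ^ 2) := by
    field_simp
  have hs0 : 0 ≤ N ^ 2 / (4 * M ^ 2) - P / M := by
    rw [hs]; exact div_nonneg hnn hM2.le
  have hsq : Real.sqrt (N ^ 2 / (4 * M ^ 2) - P / M) ^ 2 = N ^ 2 / (4 * M ^ 2) - P / M :=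
    Real.sq_sqrt hs0
  have key : M * σ ^ 2 - N * σ + P
      = M * ((σ - N / (2 * M)) ^ 2 - (N ^ 2 / (4 * M ^ 2) - P / M)) := by
    field_simp; ring
  rw [key]
  rcases hσ with h | h <;> subst h
  · rw [add_sub_cancel_left, hsq]; ring
  · rw [sub_sub_cancel_left, neg_sq, hsq]; ring
end
end

section
/- Let F_{ab} be antisymmetric on Minkowski 4-space with invariants F, G, let σ be real, and define the optical metric g̃^{bc} = η^{bc} + σ F^{bd} F^c{}_d. Then det(g̃^{cd}) = (1 + σF - σ²G²)² det(η^{cd}) = -(1 + σF - σ²G²)². In particular, g̃ is either degenerate or of Lorentzian signature. -/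
open Finset

noncomputable section

theorem det4aux (M : Matrix (Fin 4) (Fin 4) ℝ) :
    M.det =
      M 0 0 * M 1 1 * M 2 2 * M 3 3 - M 0 0 * M 1 1 * M 2 3 * M 3 2 -
      M 0 0 * M 1 2 * M 2 1 * M 3 3 + M 0 0 * M 1 2 * M 2 3 * M 3 1 +
      M 0 0 * M 1 3 * M 2 1 * M 3 2 - M 0 0 * M 1 3 * M 2 2 * M 3 1 -
      M 0 1 * M 1 0 * M 2 2 * M 3 3 + M 0 1 * M 1 0 * M 2 3 * M 3 2 +
      M 0 1 * M 1 2 * M 2 0 * M 3 3 - M 0 1 * M 1 2 * M 2 3 * M 3 0 -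
      M 0 1 * M 1 3 * M 2 0 * M 3 2 + M 0 1 * M 1 3 * M 2 2 * M 3 0 +
      M 0 2 * M 1 0 * M 2 1 * M 3 3 - M 0 2 * M 1 0 * M 2 3 * M 3 1 -
      M 0 2 * M 1 1 * M 2 0 * M 3 3 + M 0 2 * M 1 1 * M 2 3 * M 3 0 +
      M 0 2 * M 1 3 * M 2 0 * M 3 1 - M 0 2 * M 1 3 * M 2 1 * M 3 0 -
      M 0 3 * M 1 0 * M 2 1 * M 3 2 + M 0 3 * M 1 0 * M 2 2 * M 3 1 +
      M 0 3 * M 1 1 * M 2 0 * M 3 2 - M 0 3 * M 1 1 * M 2 2 * M 3 0 -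
      M 0 3 * M 1 2 * M 2 0 * M 3 1 + M 0 3 * M 1 2 * M 2 1 * M 3 0 := by
  simp [Matrix.det_succ_row_zero, Fin.sum_univ_succ,
    show (Fin.succ 2 : Fin 4) = 3 from rfl,
    show (Fin.castSucc 2 : Fin 4) = 2 from rfl,
    show ((2:Fin 4).succAbove 2 : Fin 4) = 3 from rfl,
    show ((1:Fin 4).succAbove 2 : Fin 4) = 3 from rfl,
    show ((3:Fin 4).succAbove 2 : Fin 4) = 2 from rfl]
  ring

set_option maxHeartbeats 2000000 in
/-- det(g̃^{cd}) = (1 + σF - σ²G²)² det(η^{cd}) = -(1 + σF - σ²G²)². -/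
theorem stmt5 (F : Matrix (Fin 4) (Fin 4) ℝ) (hF : AntisymM4 F) (σ : ℝ) :
    (gtil F σ).det = (1 + σ * invF F - σ ^ 2 * (invG F) ^ 2) ^ 2 * eta.det ∧
    (gtil F σ).det = -(1 + σ * invF F - σ ^ 2 * (invG F) ^ 2) ^ 2 := by
  have d0 : F 0 0 = 0 := by have := hF 0 0; linarith
  have d1 : F 1 1 = 0 := by have := hF 1 1; linarith
  have d2 : F 2 2 = 0 := by have := hF 2 2; linarith
  have d3 : F 3 3 = 0 := by have := hF 3 3; linarith
  have h10 := hF 1 0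
  have h20 := hF 2 0
  have h30 := hF 3 0
  have h21 := hF 2 1
  have h31 := hF 3 1
  have h32 := hF 3 2
  have hdet : eta.det = -1 := by
    rw [det4aux]; simp [eta]
  have hf : invF F = -(F 0 1)^2 - (F 0 2)^2 - (F 0 3)^2
      + (F 1 2)^2 + (F 1 3)^2 + (F 2 3)^2 := by
    simp [invF, raise, eta, Fin.sum_univ_four]
    simp only [d0, d1, d2, d3, h10, h20, h30, h21, h31, h32]
    ring
  have hg : invG F = F 0 1 * F 2 3 - F 0 2 * F 1 3 + F 0 3 * F 1 2 := by
    simp [invG, raise, hodge, eps, eta, Fin.sum_univ_four,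
      show ((3 : Fin 4) : ℕ) = 3 from rfl, show ((2 : Fin 4) : ℕ) = 2 from rfl,
      show ((1 : Fin 4) : ℕ) = 1 from rfl, show ((0 : Fin 4) : ℕ) = 0 from rfl]
    norm_num
    simp only [d0, d1, d2, d3, h10, h20, h30, h21, h31, h32]
    ring
  have key : (gtil F σ).det = -(1 + σ * invF F - σ ^ 2 * (invG F) ^ 2) ^ 2 := by
    rw [det4aux, hf, hg]
    simp [gtil, raise, mixud, eta, Fin.sum_univ_four]
    simp only [d0, d1, d2, d3, h10, h20, h30, h21, h31, h32]
    ring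
  exact ⟨by rw [key, hdet]; ring, key⟩
end
end

section
/- Let F_{ab} be antisymmetric on Minkowski 4-space with invariants F, G, let σ be real with D := 1 + σF - σ²G² ≠ 0, and let g̃^{bc} = η^{bc} + σ F^{bd}F^c{}_d. Define g̃⁻¹_{cd} = (η_{cd} - σ (⋆F)_c{}^b (⋆F)_{db}) / D. Then g̃⁻¹_{ac} g̃^{cb} = δ_a^b, i.e., g̃⁻¹ is the matrix inverse of the optical metric. Moreover g̃⁻¹_{cd} = ((1+σF) η_{cd} - σ F_c{}^b F_{db}) / D. -/
open Finset

noncomputable section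
set_option maxHeartbeats 1000000

lemma antisym_eq (F : Matrix (Fin 4) (Fin 4) ℝ) (hF : AntisymM4 F) :
    F = !![0, F 0 1, F 0 2, F 0 3; -(F 0 1), 0, F 1 2, F 1 3;
          -(F 0 2), -(F 1 2), 0, F 2 3; -(F 0 3), -(F 1 3), -(F 2 3), 0] := by
  have h0 : ∀ a, F a a = 0 := fun a => by have := hF a a; linarith
  funext a b
  fin_cases a <;> fin_cases b <;>
    simp [h0, hF 1 0, hF 2 0, hF 2 1, hF 3 0, hF 3 1, hF 3 2]

lemma hodge_expl (x01 x02 x03 x12 x13 x23 : ℝ) :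
    hodge !![0, x01, x02, x03; -x01, 0, x12, x13;
             -x02, -x12, 0, x23; -x03, -x13, -x23, 0] =
    !![0, x23, -x13, x12; -x23, 0, -x03, x02;
       x13, x03, 0, -x01; -x12, -x02, x01, 0] := by
  funext a b
  fin_cases a <;> fin_cases b <;>
    · simp [hodge, raise, eta, Fin.sum_univ_four]
      norm_num [eps, (show ((0:Fin 4):ℕ)=0 from rfl), (show ((1:Fin 4):ℕ)=1 from rfl),
        (show ((2:Fin 4):ℕ)=2 from rfl), (show ((3:Fin 4):ℕ)=3 from rfl)]
      try ring

lemma invF_expl (x01 x02 x03 x12 x13 x23 : ℝ) :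
    invF !![0, x01, x02, x03; -x01, 0, x12, x13;
            -x02, -x12, 0, x23; -x03, -x13, -x23, 0] =
    x12^2 + x13^2 + x23^2 - x01^2 - x02^2 - x03^2 := by
  simp [invF, raise, eta, Fin.sum_univ_four]
  ring

lemma invG_expl (x01 x02 x03 x12 x13 x23 : ℝ) :
    invG !![0, x01, x02, x03; -x01, 0, x12, x13;
            -x02, -x12, 0, x23; -x03, -x13, -x23, 0] =
    x01*x23 - x02*x13 + x03*x12 := by
  simp [invG, hodge_expl, raise, eta, Fin.sum_univ_four]
  ring


lemma key1 (x01 x02 x03 x12 x13 x23 σ : ℝ) :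
    ∀ a b, (∑ c, (eta a c - σ * ∑ e, mixdu (hodge !![0, x01, x02, x03; -x01, 0, x12, x13;
            -x02, -x12, 0, x23; -x03, -x13, -x23, 0]) a e *
          hodge !![0, x01, x02, x03; -x01, 0, x12, x13;
            -x02, -x12, 0, x23; -x03, -x13, -x23, 0] c e) *
      gtil !![0, x01, x02, x03; -x01, 0, x12, x13;
            -x02, -x12, 0, x23; -x03, -x13, -x23, 0] σ c b)
      = (1 + σ * (x12^2 + x13^2 + x23^2 - x01^2 - x02^2 - x03^2)
         - σ ^ 2 * (x01*x23 - x02*x13 + x03*x12) ^ 2) * (if a = b then (1 : ℝ) else 0) := by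
  intro a b
  fin_cases a <;> fin_cases b <;>
  · simp [gtil, mixdu, mixud, raise, hodge_expl, eta, Fin.sum_univ_four]
    try ring

lemma key2 (x01 x02 x03 x12 x13 x23 σ : ℝ) :
    ∀ c d, (eta c d - σ * ∑ e, mixdu (hodge !![0, x01, x02, x03; -x01, 0, x12, x13;
            -x02, -x12, 0, x23; -x03, -x13, -x23, 0]) c e *
          hodge !![0, x01, x02, x03; -x01, 0, x12, x13;
            -x02, -x12, 0, x23; -x03, -x13, -x23, 0] d e)
      = ((1 + σ * (x12^2 + x13^2 + x23^2 - x01^2 - x02^2 - x03^2)) * eta c d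
         - σ * ∑ e, mixdu !![0, x01, x02, x03; -x01, 0, x12, x13;
            -x02, -x12, 0, x23; -x03, -x13, -x23, 0] c e *
          !![0, x01, x02, x03; -x01, 0, x12, x13;
            -x02, -x12, 0, x23; -x03, -x13, -x23, 0] d e) := by
  intro c d
  fin_cases c <;> fin_cases d <;>
  · simp [mixdu, hodge_expl, eta, Fin.sum_univ_four]
    try ring
    try tauto


/-- With D = 1 + σF - σ²G² ≠ 0, the matrix
    g̃⁻¹_{cd} = (η_{cd} - σ (⋆F)_c{}^b (⋆F)_{db})/D is the inverse of the
    optical metric, and also equals ((1+σF)η_{cd} - σ F_c{}^b F_{db})/D. -/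
theorem stmt6 (F : Matrix (Fin 4) (Fin 4) ℝ) (hF : AntisymM4 F) (σ : ℝ)
    (hD : 1 + σ * invF F - σ ^ 2 * (invG F) ^ 2 ≠ 0) :
    let D := 1 + σ * invF F - σ ^ 2 * (invG F) ^ 2
    let ginv : Matrix (Fin 4) (Fin 4) ℝ := Matrix.of fun c d =>
      (eta c d - σ * ∑ b, mixdu (hodge F) c b * hodge F d b) / D
    (∀ a b, ∑ c, ginv a c * gtil F σ c b = if a = b then (1 : ℝ) else 0) ∧
    (∀ c d, ginv c d =
      ((1 + σ * invF F) * eta c d - σ * ∑ b, mixdu F c b * F d b) / D) := by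
  intro D ginv
  have hE := antisym_eq F hF
  have hDval : D = 1 + σ * (F 1 2^2 + F 1 3^2 + F 2 3^2 - F 0 1^2 - F 0 2^2 - F 0 3^2)
      - σ ^ 2 * (F 0 1 * F 2 3 - F 0 2 * F 1 3 + F 0 3 * F 1 2) ^ 2 := by
    show 1 + σ * invF F - σ ^ 2 * (invG F) ^ 2 = _
    conv_lhs => rw [hE]
    rw [invF_expl, invG_expl]
  have hD' : D ≠ 0 := hD
  constructor
  · intro a b
    have key := key1 (F 0 1) (F 0 2) (F 0 3) (F 1 2) (F 1 3) (F 2 3) σ a b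
    rw [← hE, ← hDval] at key
    have : ∀ c, ginv a c * gtil F σ c b
        = ((eta a c - σ * ∑ e, mixdu (hodge F) a e * hodge F c e) * gtil F σ c b) / D := by
      intro c
      show ((eta a c - σ * ∑ e, mixdu (hodge F) a e * hodge F c e) / D) * gtil F σ c b = _
      ring
    rw [Finset.sum_congr rfl (fun c _ => this c), ← Finset.sum_div, key,
      mul_div_cancel_left₀ _ hD']
  · intro c d
    have key := key2 (F 0 1) (F 0 2) (F 0 3) (F 1 2) (F 1 3) (F 2 3) σ c d
    rw [← hE] at key
    show (eta c d - σ * ∑ b, mixdu (hodge F) c b * hodge F d b) / D = _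
    have hFv : invF F = F 1 2^2 + F 1 3^2 + F 2 3^2 - F 0 1^2 - F 0 2^2 - F 0 3^2 := by
      conv_lhs => rw [hE]
      rw [invF_expl]
    rw [key, hDval, hFv]

end
end

section
/- With M, N, P defined from L_F, L_FF, L_FG, L_GG, F, G as in the Plebański-class eikonal analysis, assume M ≠ 0 and let σ be a root of M σ² - N σ + P = 0 (i.e., σ = σ_±). Then the following are equivalent: (a) N² = 4MP; (b) L_F L_GG = N and L_F L_FG = P G; (c) D M = L_F², D N = 2 L_F² σ, and D P = L_F² σ², where D = 1 + Fσ - G²σ². -/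
open Finset

noncomputable section

lemma rev_lemma (D M N P a s : ℝ) (hD : D ≠ 0) (h1 : D * M = a ^ 2)
    (h2 : D * N = 2 * a ^ 2 * s) (h3 : D * P = a ^ 2 * s ^ 2) : N ^ 2 = 4 * M * P := by
  have h : D ^ 2 * (N ^ 2 - 4 * M * P) = 0 := by
    linear_combination (D * N + 2 * a ^ 2 * s) * h2 - 4 * D * M * h3 - 4 * a ^ 2 * s ^ 2 * h1
  rcases mul_eq_zero.mp h with h | h
  · exact absurd ((pow_eq_zero_iff (two_ne_zero)).mp h) hD
  · linarith

set_option maxHeartbeats 2000000 in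
lemma key (LF LFF LFG LGG F G σ P M N D : ℝ)
    (hP : P = LFF * LGG - LFG ^ 2)
    (hMd : M = LF ^ 2 + 2 * LF * LFG * G - (1 / 2) * LF * LGG * F - P * G ^ 2)
    (hNd : N = 2 * LF * LFF + (1 / 2) * LF * LGG - P * F)
    (hDd : D = 1 + F * σ - G ^ 2 * σ ^ 2)
    (hM : M ≠ 0) (hroot : M * σ ^ 2 - N * σ + P = 0) (hD : D ≠ 0) :
    ((N ^ 2 = 4 * M * P ↔ (LF * LGG = N ∧ LF * LFG = P * G)) ∧
     (N ^ 2 = 4 * M * P ↔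
       (D * M = LF ^ 2 ∧ D * N = 2 * LF ^ 2 * σ ∧ D * P = LF ^ 2 * σ ^ 2))) := by
  subst hDd hNd hMd hP
  have hdisc : (2 * LF * LFF + (1 / 2) * LF * LGG - (LFF * LGG - LFG ^ 2) * F) ^ 2 - 4 * (LF ^ 2 + 2 * LF * LFG * G - (1 / 2) * LF * LGG * F - (LFF * LGG - LFG ^ 2) * G ^ 2) * (LFF * LGG - LFG ^ 2)
      = ((2 * LF * LFF + (1 / 2) * LF * LGG - (LFF * LGG - LFG ^ 2) * F) - LF * LGG) ^ 2 + 4 * ((LFF * LGG - LFG ^ 2) * G - LF * LFG) ^ 2 := by ring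
  have hab : (2 * LF * LFF + (1 / 2) * LF * LGG - (LFF * LGG - LFG ^ 2) * F) ^ 2 = 4 * (LF ^ 2 + 2 * LF * LFG * G - (1 / 2) * LF * LGG * F - (LFF * LGG - LFG ^ 2) * G ^ 2) * (LFF * LGG - LFG ^ 2) ↔ (LF * LGG = (2 * LF * LFF + (1 / 2) * LF * LGG - (LFF * LGG - LFG ^ 2) * F) ∧ LF * LFG = (LFF * LGG - LFG ^ 2) * G) := by
    constructor
    · intro ha
      have h0 : ((2 * LF * LFF + (1 / 2) * LF * LGG - (LFF * LGG - LFG ^ 2) * F) - LF * LGG) ^ 2 + 4 * ((LFF * LGG - LFG ^ 2) * G - LF * LFG) ^ 2 = 0 := by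
        linear_combination ha - hdisc
      have hX2 : ((2 * LF * LFF + (1 / 2) * LF * LGG - (LFF * LGG - LFG ^ 2) * F) - LF * LGG) ^ 2 = 0 := by
        linarith [h0, sq_nonneg ((2 * LF * LFF + (1 / 2) * LF * LGG - (LFF * LGG - LFG ^ 2) * F) - LF * LGG), sq_nonneg ((LFF * LGG - LFG ^ 2) * G - LF * LFG)]
      have hY2 : ((LFF * LGG - LFG ^ 2) * G - LF * LFG) ^ 2 = 0 := by
        linarith [h0, sq_nonneg ((2 * LF * LFF + (1 / 2) * LF * LGG - (LFF * LGG - LFG ^ 2) * F) - LF * LGG), sq_nonneg ((LFF * LGG - LFG ^ 2) * G - LF * LFG)]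
      have hX := (pow_eq_zero_iff (two_ne_zero)).mp hX2
      have hY := (pow_eq_zero_iff (two_ne_zero)).mp hY2
      constructor
      · linarith
      · linarith
    · rintro ⟨h1, h2⟩
      linear_combination hdisc + (LF * LGG - (2 * LF * LFF + (1 / 2) * LF * LGG - (LFF * LGG - LFG ^ 2) * F)) * h1 + (4 * (LF * LFG - (LFF * LGG - LFG ^ 2) * G)) * h2
  refine ⟨hab, ?_, ?_⟩
  · intro ha
    obtain ⟨h1, h2⟩ := hab.mp ha
    have hsq : (2 * (LF ^ 2 + 2 * LF * LFG * G - (1 / 2) * LF * LGG * F - (LFF * LGG - LFG ^ 2) * G ^ 2) * σ - (2 * LF * LFF + (1 / 2) * LF * LGG - (LFF * LGG - LFG ^ 2) * F)) ^ 2 = 0 := by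
      linear_combination 4 * (LF ^ 2 + 2 * LF * LFG * G - (1 / 2) * LF * LGG * F - (LFF * LGG - LFG ^ 2) * G ^ 2) * hroot + ha
    have hNs : 2 * (LF ^ 2 + 2 * LF * LFG * G - (1 / 2) * LF * LGG * F - (LFF * LGG - LFG ^ 2) * G ^ 2) * σ - (2 * LF * LFF + (1 / 2) * LF * LGG - (LFF * LGG - LFG ^ 2) * F) = 0 := (pow_eq_zero_iff (two_ne_zero)).mp hsq
    have hPs : (LFF * LGG - LFG ^ 2) - (LF ^ 2 + 2 * LF * LFG * G - (1 / 2) * LF * LGG * F - (LFF * LGG - LFG ^ 2) * G ^ 2) * σ ^ 2 = 0 := by linear_combination hroot - σ * hNs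
    refine ⟨?_, ?_, ?_⟩
    · linear_combination (-(F / 2)) * h1 + (2 * G) * h2 + (F / 2) * hNs + G ^ 2 * hPs
    · linear_combination (-(F * σ)) * h1 + (4 * G * σ) * h2 + (F * σ) * hNs
        + (2 * G ^ 2 * σ) * hPs - (1 + F * σ - G ^ 2 * σ ^ 2) * hNs
    · linear_combination (-(F * σ ^ 2 / 2)) * h1 + (2 * G * σ ^ 2) * h2 + (F * σ ^ 2 / 2) * hNs
        + (G ^ 2 * σ ^ 2) * hPs + (1 + F * σ - G ^ 2 * σ ^ 2) * hPs
  · rintro ⟨hc1, hc2, hc3⟩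
    exact rev_lemma (1 + F * σ - G ^ 2 * σ ^ 2) (LF ^ 2 + 2 * LF * LFG * G - (1 / 2) * LF * LGG * F - (LFF * LGG - LFG ^ 2) * G ^ 2) (2 * LF * LFF + (1 / 2) * LF * LGG - (LFF * LGG - LFG ^ 2) * F) (LFF * LGG - LFG ^ 2) LF σ hD hc1 hc2 hc3

/-- Equivalence of (a) N² = 4MP, (b) L_F L_GG = N ∧ L_F L_FG = PG,
    (c) DM = L_F², DN = 2L_F²σ, DP = L_F²σ², for σ a root of Mσ² - Nσ + P = 0. -/
theorem stmt7 (LF LFF LFG LGG F G σ : ℝ) (hLF : LF ≠ 0) :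
    let P := LFF * LGG - LFG ^ 2
    let M := LF ^ 2 + 2 * LF * LFG * G - (1 / 2) * LF * LGG * F - P * G ^ 2
    let N := 2 * LF * LFF + (1 / 2) * LF * LGG - P * F
    let D := 1 + F * σ - G ^ 2 * σ ^ 2
    M ≠ 0 → M * σ ^ 2 - N * σ + P = 0 → D ≠ 0 →
    ((N ^ 2 = 4 * M * P ↔ (LF * LGG = N ∧ LF * LFG = P * G)) ∧
     (N ^ 2 = 4 * M * P ↔
       (D * M = LF ^ 2 ∧ D * N = 2 * LF ^ 2 * σ ∧ D * P = LF ^ 2 * σ ^ 2))) := by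
  intro P M N D hM hroot hD
  exact key LF LFF LFG LGG F G σ P M N D rfl rfl rfl rfl hM hroot hD
end
end

section
/- Under the same setup, conditions (a)–(c) of the previous equivalence are also equivalent to: (d) 2 D L_FF = L_F σ (1 + F σ), D L_GG = 2 L_F σ, and D L_FG = L_F G σ², where D = 1 + Fσ - G²σ². -/
open Finset

noncomputable section

lemma sq_add_sq_eq_zero'' {x y : ℝ} (h : x ^ 2 + y ^ 2 = 0) : x = 0 ∧ y = 0 := by
  constructor <;> nlinarith [sq_nonneg x, sq_nonneg y]

set_option maxHeartbeats 1600000 in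
/-- (a) N² = 4MP is also equivalent to (d): 2D L_FF = L_F σ(1+Fσ),
    D L_GG = 2 L_F σ and D L_FG = L_F G σ². -/
theorem stmt8 (LF LFF LFG LGG F G σ : ℝ) (hLF : LF ≠ 0) :
    let P := LFF * LGG - LFG ^ 2
    let M := LF ^ 2 + 2 * LF * LFG * G - (1 / 2) * LF * LGG * F - P * G ^ 2
    let N := 2 * LF * LFF + (1 / 2) * LF * LGG - P * F
    let D := 1 + F * σ - G ^ 2 * σ ^ 2
    M ≠ 0 → M * σ ^ 2 - N * σ + P = 0 → D ≠ 0 →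
    (N ^ 2 = 4 * M * P ↔
      (2 * D * LFF = LF * σ * (1 + F * σ) ∧
       D * LGG = 2 * LF * σ ∧
       D * LFG = LF * G * σ ^ 2)) := by
  dsimp only
  intro hM hroot hD
  have hKne : (1 + G ^ 2 * σ ^ 2) ≠ 0 := by positivity
  constructor
  · intro h
    have hN2 : 2 * LF * LFF + 1 / 2 * LF * LGG - (LFF * LGG - LFG ^ 2) * F =
        2 * (LF ^ 2 + 2 * LF * LFG * G - 1 / 2 * LF * LGG * F - (LFF * LGG - LFG ^ 2) * G ^ 2) * σ := by
      have hsq : (2 * (LF ^ 2 + 2 * LF * LFG * G - 1 / 2 * LF * LGG * F - (LFF * LGG - LFG ^ 2) * G ^ 2) * σ -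
          (2 * LF * LFF + 1 / 2 * LF * LGG - (LFF * LGG - LFG ^ 2) * F)) ^ 2 = 0 := by
        linear_combination 4 * (LF ^ 2 + 2 * LF * LFG * G - 1 / 2 * LF * LGG * F - (LFF * LGG - LFG ^ 2) * G ^ 2) * hroot + h
      have h0 := pow_eq_zero_iff two_ne_zero |>.mp hsq
      linarith
    have hP2 : LFF * LGG - LFG ^ 2 =
        (LF ^ 2 + 2 * LF * LFG * G - 1 / 2 * LF * LGG * F - (LFF * LGG - LFG ^ 2) * G ^ 2) * σ ^ 2 := by
      linear_combination hroot + σ * hN2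
    have key : LF * (1 + F * σ - G ^ 2 * σ ^ 2) * ((4 * (1 + G ^ 2 * σ ^ 2) * ((1 + F * σ - G ^ 2 * σ ^ 2) * LFG - LF * G * σ ^ 2) - (2 * G * σ * (2 + F * σ)) * ((1 + F * σ - G ^ 2 * σ ^ 2) * LGG - 2 * LF * σ)) ^ 2 + (2 * (1 + F * σ - G ^ 2 * σ ^ 2) * ((1 + F * σ - G ^ 2 * σ ^ 2) * LGG - 2 * LF * σ)) ^ 2) = 0 := by
      linear_combination (-16 * (1 + G ^ 2 * σ ^ 2) * (LF * (1 + F * σ - G ^ 2 * σ ^ 2) ^ 3 - (((1 + F * σ - G ^ 2 * σ ^ 2) * LGG - 2 * LF * σ) / 2 + LF * σ) * (F - 2 * G ^ 2 * σ) * (1 + F * σ - G ^ 2 * σ ^ 2) ^ 2)) * hP2 + (16 * (1 + G ^ 2 * σ ^ 2) ^ 2 * (((1 + F * σ - G ^ 2 * σ ^ 2) * LGG - 2 * LF * σ) / 2 + LF * σ) * (1 + F * σ - G ^ 2 * σ ^ 2) ^ 2) * hN2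
    have hS : (4 * (1 + G ^ 2 * σ ^ 2) * ((1 + F * σ - G ^ 2 * σ ^ 2) * LFG - LF * G * σ ^ 2) - (2 * G * σ * (2 + F * σ)) * ((1 + F * σ - G ^ 2 * σ ^ 2) * LGG - 2 * LF * σ)) ^ 2 + (2 * (1 + F * σ - G ^ 2 * σ ^ 2) * ((1 + F * σ - G ^ 2 * σ ^ 2) * LGG - 2 * LF * σ)) ^ 2 = 0 :=
      ((mul_eq_zero.mp key).resolve_left (mul_ne_zero hLF hD))
    obtain ⟨hv1, hu0⟩ := sq_add_sq_eq_zero'' hS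
    have hu : ((1 + F * σ - G ^ 2 * σ ^ 2) * LGG - 2 * LF * σ) = 0 :=
      (mul_eq_zero.mp hu0).resolve_left (mul_ne_zero two_ne_zero hD)
    have hv : ((1 + F * σ - G ^ 2 * σ ^ 2) * LFG - LF * G * σ ^ 2) = 0 := by
      have h4 : (4 * (1 + G ^ 2 * σ ^ 2)) * ((1 + F * σ - G ^ 2 * σ ^ 2) * LFG - LF * G * σ ^ 2) = 0 := by linear_combination hv1 + (2 * G * σ * (2 + F * σ)) * hu
      exact (mul_eq_zero.mp h4).resolve_left (by positivity)
    have hw0 : LF * (1 + F * σ - G ^ 2 * σ ^ 2) * ((((1 + F * σ) ^ 2 + G ^ 2 * σ ^ 2) / 2) * ((1 + F * σ - G ^ 2 * σ ^ 2) * LGG - 2 * LF * σ) - (2 * G * σ * (2 + F * σ)) * ((1 + F * σ - G ^ 2 * σ ^ 2) * LFG - LF * G * σ ^ 2) + (1 + G ^ 2 * σ ^ 2) * (2 * (1 + F * σ - G ^ 2 * σ ^ 2) * LFF - LF * σ * (1 + F * σ))) = 0 := by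
      linear_combination ((F - 2 * G ^ 2 * σ) * (1 + F * σ - G ^ 2 * σ ^ 2) ^ 2) * hP2 + ((1 + G ^ 2 * σ ^ 2) * (1 + F * σ - G ^ 2 * σ ^ 2) ^ 2) * hN2
    have hw : (2 * (1 + F * σ - G ^ 2 * σ ^ 2) * LFF - LF * σ * (1 + F * σ)) = 0 := by
      have h5 : (LF * (1 + F * σ - G ^ 2 * σ ^ 2)) * ((1 + G ^ 2 * σ ^ 2) * (2 * (1 + F * σ - G ^ 2 * σ ^ 2) * LFF - LF * σ * (1 + F * σ))) = 0 := by
        linear_combination hw0 - LF * (1 + F * σ - G ^ 2 * σ ^ 2) * (((1 + F * σ) ^ 2 + G ^ 2 * σ ^ 2) / 2) * hu + LF * (1 + F * σ - G ^ 2 * σ ^ 2) * (2 * G * σ * (2 + F * σ)) * hv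
      have h6 := (mul_eq_zero.mp h5).resolve_left (mul_ne_zero hLF hD)
      exact (mul_eq_zero.mp h6).resolve_left hKne
    exact ⟨by linarith, by linarith, by linarith⟩
  · rintro ⟨h1, h2, h3⟩
    have hx : LFF = LF * σ * (1 + F * σ) / (2 * (1 + F * σ - G ^ 2 * σ ^ 2)) := by
      rw [eq_div_iff (mul_ne_zero two_ne_zero hD)]; linarith
    have hy : LFG = LF * G * σ ^ 2 / (1 + F * σ - G ^ 2 * σ ^ 2) := by
      rw [eq_div_iff hD]; linarith
    have hz : LGG = 2 * LF * σ / (1 + F * σ - G ^ 2 * σ ^ 2) := by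
      rw [eq_div_iff hD]; linarith
    rw [hx, hy, hz]
    have hD' : 1 + σ * F - σ ^ 2 * G ^ 2 ≠ 0 := by intro h; apply hD; linear_combination h
    field_simp
    ring
end
end

section
/- Assume p_a p^a + σ u_a u^a = 0 where u_a = F_{ab}p^b, v_a = (⋆F)_{ab}p^b. Let g̃^{ab} = η^{ab} + σ F^{ac}F^b{}_c. Then g̃^{cd} p_c u_d = 0, g̃^{cd} p_c v_d = 0, g̃^{cd} u_c v_d = 0, and g̃^{cd} u_c u_d = g̃^{cd} v_c v_d = (u^c u_c)(1 + σF - σ²G²). Consequently the transport vector K^a = g̃^{ab} p_b satisfies K^a p_a = K^a u_a = K^a v_a = 0. -/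
open Finset

noncomputable section

lemma v0' : ((0:Fin 4):ℕ) = 0 := rfl
lemma v1' : ((1:Fin 4):ℕ) = 1 := rfl
lemma v2' : ((2:Fin 4):ℕ) = 2 := rfl
lemma v3' : ((3:Fin 4):ℕ) = 3 := rfl

set_option maxHeartbeats 1000000 in
lemma hodge_apply (F : Matrix (Fin 4) (Fin 4) ℝ) (hF : AntisymM4 F) (i j : Fin 4) :
    hodge F i j =
      !![0, F 2 3, -(F 1 3), F 1 2;
         -(F 2 3), 0, -(F 0 3), F 0 2;
         F 1 3, F 0 3, 0, -(F 0 1);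
         -(F 1 2), -(F 0 2), F 0 1, 0] i j := by
  have h00 : F 0 0 = 0 := by have := hF 0 0; linarith
  have h11 : F 1 1 = 0 := by have := hF 1 1; linarith
  have h22 : F 2 2 = 0 := by have := hF 2 2; linarith
  have h33 : F 3 3 = 0 := by have := hF 3 3; linarith
  fin_cases i <;> fin_cases j <;>
    · simp only [hodge, raise, Matrix.of_apply, Fin.sum_univ_four]
      simp only [eta, Matrix.of_apply, Fin.reduceEq, reduceIte, ite_true, ite_false, eq_self_iff_true]
      norm_num [eta, eps, v0', v1', v2', v3',
        h00, h11, h22, h33, hF 1 0, hF 2 0, hF 3 0, hF 2 1, hF 3 1, hF 3 2]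
      try ring

/-- Under the eikonal condition p_ap^a + σ u_au^a = 0, the optical-metric
    contractions of p, u, v vanish appropriately, and the transport vector
    K^a = g̃^{ab}p_b is orthogonal to p, u and v. -/
theorem stmt10 (F : Matrix (Fin 4) (Fin 4) ℝ) (hF : AntisymM4 F) (σ : ℝ)
    (p : Fin 4 → ℝ)
    (heik : contra p p + σ * contra (lower F p) (lower F p) = 0) :
    (∑ c, ∑ d, gtil F σ c d * p c * lower F p d = 0) ∧
    (∑ c, ∑ d, gtil F σ c d * p c * lower (hodge F) p d = 0) ∧
    (∑ c, ∑ d, gtil F σ c d * lower F p c * lower (hodge F) p d = 0) ∧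
    (∑ c, ∑ d, gtil F σ c d * lower F p c * lower F p d =
      contra (lower F p) (lower F p) *
        (1 + σ * invF F - σ ^ 2 * (invG F) ^ 2)) ∧
    (∑ c, ∑ d, gtil F σ c d * lower (hodge F) p c * lower (hodge F) p d =
      contra (lower F p) (lower F p) *
        (1 + σ * invF F - σ ^ 2 * (invG F) ^ 2)) ∧
    (∑ a, (∑ b, gtil F σ a b * p b) * p a = 0) ∧
    (∑ a, (∑ b, gtil F σ a b * p b) * lower F p a = 0) ∧
    (∑ a, (∑ b, gtil F σ a b * p b) * lower (hodge F) p a = 0) := by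
  have h00 : F 0 0 = 0 := by have := hF 0 0; linarith
  have h11 : F 1 1 = 0 := by have := hF 1 1; linarith
  have h22 : F 2 2 = 0 := by have := hF 2 2; linarith
  have h33 : F 3 3 = 0 := by have := hF 3 3; linarith
  have h10 := hF 1 0; have h20 := hF 2 0; have h30 := hF 3 0
  have h21 := hF 2 1; have h31 := hF 3 1; have h32 := hF 3 2
  simp only [gtil, lower, invF, invG, raise, mixud, vup, contra,
    hodge_apply F hF, Matrix.of_apply, Fin.sum_univ_four,
    Matrix.cons_val', Matrix.cons_val_zero, Matrix.cons_val_one, Matrix.head_cons,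
    Matrix.cons_val_fin_one, Matrix.empty_val', Matrix.head_fin_const,
    Matrix.cons_val_two, Matrix.cons_val_three, Matrix.tail_cons] at heik ⊢
  simp only [eta, Matrix.of_apply, Fin.reduceEq, reduceIte, ite_true, ite_false, eq_self_iff_true] at heik ⊢
  norm_num [eta, v0', v1', v2', v3',
    h00, h11, h22, h33, h10, h20, h30, h21, h31, h32] at heik ⊢
  refine ⟨?_, ?_, ?_, ?_, ?_, ?_, ?_, ?_⟩
  · linear_combination (0:ℝ) * heik
  · linear_combination (0:ℝ) * heik
  · linear_combination (-(F 0 3 * F 1 2 - F 0 2 * F 1 3 + F 0 1 * F 2 3)) * heik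
  · linear_combination (σ * (F 0 3 * F 1 2 - F 0 2 * F 1 3 + F 0 1 * F 2 3)^2) * heik
  · linear_combination (σ * (F 0 3 * F 1 2 - F 0 2 * F 1 3 + F 0 1 * F 2 3)^2
      - (F 1 2^2 + F 1 3^2 + F 2 3^2 - F 0 1^2 - F 0 2^2 - F 0 3^2)) * heik
  · linear_combination heik
  · linear_combination (0:ℝ) * heik
  · linear_combination (0:ℝ) * heik
end
end

section
/- For the Born-Infeld Lagrangian L(F,G) = b₀² - b₀² √(1 + F/b₀² - G²/b₀⁴), with M, N, P the standard quadratic combinations of its partial derivatives, one has N² = 4MP and the unique root of Mσ² - Nσ + P = 0 is σ = -1/(b₀² + F). Hence the two optical metrics coincide: g̃^{ab} = η^{ab} - F^{ac}F^b{}_c/(b₀² + F). -/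
open Finset

noncomputable section

/-- The Born-Infeld Lagrangian L(F,G) = b₀² - b₀²√(1 + F/b₀² - G²/b₀⁴). -/
def BIL (b0 F G : ℝ) : ℝ :=
  b0 ^ 2 - b0 ^ 2 * Real.sqrt (1 + F / b0 ^ 2 - G ^ 2 / b0 ^ 4)


lemma BIL_hasDerivAt_F (b0 x y : ℝ) (hb : b0 ≠ 0)
    (h : 0 < 1 + x / b0 ^ 2 - y ^ 2 / b0 ^ 4) :
    HasDerivAt (fun x' => BIL b0 x' y)
      (-(1 / (2 * Real.sqrt (1 + x / b0 ^ 2 - y ^ 2 / b0 ^ 4)))) x := by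
  have hw : HasDerivAt (fun x' => 1 + x' / b0 ^ 2 - y ^ 2 / b0 ^ 4) (1 / b0 ^ 2) x := by
    simpa using (((hasDerivAt_id x).div_const (b0 ^ 2)).const_add 1).sub_const (y ^ 2 / b0 ^ 4)
  have hs := (Real.hasDerivAt_sqrt h.ne').comp x hw
  have h2 := (hs.const_mul (b0 ^ 2)).const_sub (b0 ^ 2)
  have hsp : 0 < Real.sqrt (1 + x / b0 ^ 2 - y ^ 2 / b0 ^ 4) := Real.sqrt_pos.2 h
  refine h2.congr_deriv ?_
  set s := Real.sqrt (1 + x / b0 ^ 2 - y ^ 2 / b0 ^ 4) with hsdef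
  field_simp

lemma BIL_hasDerivAt_G (b0 x y : ℝ) (hb : b0 ≠ 0)
    (h : 0 < 1 + x / b0 ^ 2 - y ^ 2 / b0 ^ 4) :
    HasDerivAt (fun y' => BIL b0 x y')
      (y / (b0 ^ 2 * Real.sqrt (1 + x / b0 ^ 2 - y ^ 2 / b0 ^ 4))) y := by
  have hw : HasDerivAt (fun y' => 1 + x / b0 ^ 2 - y' ^ 2 / b0 ^ 4) (-(2 * y / b0 ^ 4)) y := by
    have := ((hasDerivAt_pow 2 y).div_const (b0 ^ 4)).const_sub (1 + x / b0 ^ 2)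
    refine this.congr_deriv ?_
    push_cast; ring
  have hs := (Real.hasDerivAt_sqrt h.ne').comp y hw
  have h2 := (hs.const_mul (b0 ^ 2)).const_sub (b0 ^ 2)
  have hsp : 0 < Real.sqrt (1 + x / b0 ^ 2 - y ^ 2 / b0 ^ 4) := Real.sqrt_pos.2 h
  refine h2.congr_deriv ?_
  set s := Real.sqrt (1 + x / b0 ^ 2 - y ^ 2 / b0 ^ 4) with hsdef
  field_simp


/-- For the Born-Infeld Lagrangian, N² = 4MP and the unique root of
    Mσ² - Nσ + P = 0 is σ = -1/(b₀² + F); hence the two optical metrics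
    coincide and equal η^{ab} - F^{ac}F^b{}_c/(b₀² + F). -/
theorem stmt15 (b0 F G : ℝ) (hb : 0 < b0)
    (hW : 0 < 1 + F / b0 ^ 2 - G ^ 2 / b0 ^ 4) (hbF : b0 ^ 2 + F ≠ 0) :
    let LF := deriv (fun x => BIL b0 x G) F
    let LFF := deriv (fun x => deriv (fun x' => BIL b0 x' G) x) F
    let LFG := deriv (fun y => deriv (fun x => BIL b0 x y) F) G
    let LGG := deriv (fun y => deriv (fun y' => BIL b0 F y') y) G
    let P := LFF * LGG - LFG ^ 2
    let M := LF ^ 2 + 2 * LF * LFG * G - (1 / 2) * LF * LGG * F - P * G ^ 2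
    let N := 2 * LF * LFF + (1 / 2) * LF * LGG - P * F
    M ≠ 0 →
    (N ^ 2 = 4 * M * P ∧
     M * (-1 / (b0 ^ 2 + F)) ^ 2 - N * (-1 / (b0 ^ 2 + F)) + P = 0 ∧
     (∀ σ : ℝ, M * σ ^ 2 - N * σ + P = 0 → σ = -1 / (b0 ^ 2 + F)) ∧
     (∀ Fab : Matrix (Fin 4) (Fin 4) ℝ, ∀ a b : Fin 4,
        gtil Fab (-1 / (b0 ^ 2 + F)) a b =
          eta a b - (∑ d, raise Fab a d * mixud Fab b d) / (b0 ^ 2 + F))) := by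
  
  intro LF LFF LFG LGG P M N hM0
  have hb' : b0 ≠ 0 := hb.ne'
  set s : ℝ := Real.sqrt (1 + F / b0 ^ 2 - G ^ 2 / b0 ^ 4) with hsdef
  have hs0 : 0 < s := Real.sqrt_pos.2 hW
  have hs2 : s ^ 2 = 1 + F / b0 ^ 2 - G ^ 2 / b0 ^ 4 := Real.sq_sqrt hW.le
  -- first derivatives
  have hLF : LF = -(1 / (2 * s)) := (BIL_hasDerivAt_F b0 F G hb' hW).deriv
  -- eventual positivity in x near F
  have hevF : ∀ᶠ x in nhds F, 0 < 1 + x / b0 ^ 2 - G ^ 2 / b0 ^ 4 := by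
    have hc : ContinuousAt (fun x => 1 + x / b0 ^ 2 - G ^ 2 / b0 ^ 4) F := by fun_prop
    exact hc.eventually (eventually_gt_nhds hW)
  have hevG : ∀ᶠ y in nhds G, 0 < 1 + F / b0 ^ 2 - y ^ 2 / b0 ^ 4 := by
    have hc : ContinuousAt (fun y => 1 + F / b0 ^ 2 - y ^ 2 / b0 ^ 4) G := by fun_prop
    exact hc.eventually (eventually_gt_nhds hW)
  -- LFF
  have hLFF : LFF = 1 / (4 * b0 ^ 2 * s ^ 3) := by
    have heq : (fun x => deriv (fun x' => BIL b0 x' G) x) =ᶠ[nhds F]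
        (fun x => (-(1/2)) * (Real.sqrt (1 + x / b0 ^ 2 - G ^ 2 / b0 ^ 4))⁻¹) := by
      filter_upwards [hevF] with x hx
      rw [(BIL_hasDerivAt_F b0 x G hb' hx).deriv]
      ring
    have hw : HasDerivAt (fun x => 1 + x / b0 ^ 2 - G ^ 2 / b0 ^ 4) (1 / b0 ^ 2) F := by
      simpa using (((hasDerivAt_id F).div_const (b0 ^ 2)).const_add 1).sub_const (G ^ 2 / b0 ^ 4)
    have hsq := (Real.hasDerivAt_sqrt hW.ne').comp F hw
    have hinv := hsq.inv hs0.ne'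
    have hd := hinv.const_mul (-(1/2) : ℝ)
    have : LFF = (-(1/2)) * (-(1 / (2 * s) * (1 / b0 ^ 2)) / s ^ 2) := by
      show deriv _ F = _
      simp only [Function.comp_def] at hd
      rw [heq.deriv_eq]; exact hd.deriv
    rw [this]; field_simp; ring
  -- LFG
  have hLFG : LFG = -(G / (2 * b0 ^ 4 * s ^ 3)) := by
    have heq : (fun y => deriv (fun x => BIL b0 x y) F) =ᶠ[nhds G]
        (fun y => (-(1/2)) * (Real.sqrt (1 + F / b0 ^ 2 - y ^ 2 / b0 ^ 4))⁻¹) := by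
      filter_upwards [hevG] with y hy
      rw [(BIL_hasDerivAt_F b0 F y hb' hy).deriv]
      ring
    have hw : HasDerivAt (fun y => 1 + F / b0 ^ 2 - y ^ 2 / b0 ^ 4) (-(2 * G / b0 ^ 4)) G := by
      have := ((hasDerivAt_pow 2 G).div_const (b0 ^ 4)).const_sub (1 + F / b0 ^ 2)
      refine this.congr_deriv ?_
      push_cast; ring
    have hsq := (Real.hasDerivAt_sqrt hW.ne').comp G hw
    have hinv := hsq.inv hs0.ne'
    have hd := hinv.const_mul (-(1/2) : ℝ)
    have : LFG = (-(1/2)) * (-(1 / (2 * s) * -(2 * G / b0 ^ 4)) / s ^ 2) := by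
      show deriv _ G = _
      simp only [Function.comp_def] at hd
      rw [heq.deriv_eq]; exact hd.deriv
    rw [this]; field_simp
  -- LGG
  have hLGG : LGG = 1 / (b0 ^ 2 * s) + G ^ 2 / (b0 ^ 6 * s ^ 3) := by
    have heq : (fun y => deriv (fun y' => BIL b0 F y') y) =ᶠ[nhds G]
        (fun y => (y / b0 ^ 2) * (Real.sqrt (1 + F / b0 ^ 2 - y ^ 2 / b0 ^ 4))⁻¹) := by
      filter_upwards [hevG] with y hy
      rw [(BIL_hasDerivAt_G b0 F y hb' hy).deriv]
      rw [div_mul_eq_div_div]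
      ring
    have hw : HasDerivAt (fun y => 1 + F / b0 ^ 2 - y ^ 2 / b0 ^ 4) (-(2 * G / b0 ^ 4)) G := by
      have := ((hasDerivAt_pow 2 G).div_const (b0 ^ 4)).const_sub (1 + F / b0 ^ 2)
      refine this.congr_deriv ?_
      push_cast; ring
    have hsq := (Real.hasDerivAt_sqrt hW.ne').comp G hw
    have hinv := hsq.inv hs0.ne'
    have hlin : HasDerivAt (fun y : ℝ => y / b0 ^ 2) (1 / b0 ^ 2) G := by
      simpa using (hasDerivAt_id G).div_const (b0 ^ 2)
    have hd := hlin.mul hinv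
    have : LGG = 1 / b0 ^ 2 * s⁻¹ + G / b0 ^ 2 * (-(1 / (2 * s) * -(2 * G / b0 ^ 4)) / s ^ 2) := by
      show deriv _ G = _
      simp only [Function.comp_def] at hd
      rw [heq.deriv_eq]; exact hd.deriv
    rw [this]; field_simp
  -- closed forms
  have hF' : F = b0 ^ 2 * s ^ 2 + G ^ 2 / b0 ^ 2 - b0 ^ 2 := by
    rw [hs2]
    field_simp
    ring
  have hP : P = 1 / (4 * b0 ^ 4 * s ^ 4) := by
    show LFF * LGG - LFG ^ 2 = _
    rw [hLFF, hLFG, hLGG]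
    field_simp
    ring
  have hM : M = (b0 ^ 2 + F) ^ 2 / (4 * b0 ^ 4 * s ^ 4) := by
    show LF ^ 2 + 2 * LF * LFG * G - (1 / 2) * LF * LGG * F - P * G ^ 2 = _
    rw [hP, hLF, hLFG, hLGG, hF']
    field_simp
    ring
  have hN : N = -((b0 ^ 2 + F) / (2 * b0 ^ 4 * s ^ 4)) := by
    show 2 * LF * LFF + (1 / 2) * LF * LGG - P * F = _
    rw [hP, hLF, hLFF, hLGG, hF']
    field_simp
    ring
  have h1 : N ^ 2 = 4 * M * P := by
    rw [hM, hN, hP]; field_simp; ring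
  refine ⟨h1, ?_, ?_, ?_⟩
  · rw [hM, hN, hP]
    field_simp
    ring
  · intro σ hσ
    have key : M * (2 * M * σ - N) ^ 2 = 0 := by
      linear_combination 4 * M ^ 2 * hσ + M * h1
    have h2 : 2 * M * σ - N = 0 := by
      rcases mul_eq_zero.1 key with h | h
      · exact absurd h hM0
      · exact pow_eq_zero_iff (n := 2) (by norm_num) |>.1 h
    have hMne : M = (b0 ^ 2 + F) ^ 2 / (4 * b0 ^ 4 * s ^ 4) := hM
    have : σ = N / (2 * M) := by
      field_simp
      linarith
    rw [this, hN, hM]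
    field_simp
    ring
  · intro Fab a b
    simp only [gtil, Matrix.of_apply]
    ring
end
end
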